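/- Let E be a real inner product space, and let f : E → ℝ be differentiable with gradient ∇f that is L-Lipschitz, and μ-strongly convex in the sense that f(y) ≥ f(x) + ⟨∇f(x), y − x⟩ + (μ/2)‖y − x‖² for all x, y, where 0 < μ ≤ L. Let x* be the global minimizer of f and let the gradient descent iterates be x⁽ᵏ⁺¹⁾ = x⁽ᵏ⁾ − (1/L)·∇f(x⁽ᵏ⁾) starting from an arbitrary x⁽⁰⁾. Then for every t ∈ ℕ: f(x⁽ᵗ⁾) − f(x*) ≤ (1 − μ/L)ᵗ · (f(x⁽⁰⁾) − f(x*)). -/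

import Mathlib

open RealInnerProductSpace

lemma descent_lemma {E : Type*} [NormedAddCommGroup E]
    [InnerProductSpace ℝ E] [CompleteSpace E] (f : E → ℝ) (g : E → E) (L : ℝ) (hL : 0 < L)
    (hdiff : ∀ z, HasGradientAt f (g z) z)
    (hlip : ∀ z w, ‖g z - g w‖ ≤ L * ‖z - w‖) (p d : E) :
    f (p + d) ≤ f p + ⟪g p, d⟫ + L / 2 * ‖d‖ ^ 2 := by
  set φ : ℝ → ℝ := fun t => L / 2 * ‖d‖ ^ 2 * t ^ 2 + ⟪g p, d⟫ * t + f p - f (p + t • d)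
    with hφ
  have hγ : ∀ t : ℝ, HasDerivAt (fun s : ℝ => p + s • d) d t := by
    intro t
    simpa using ((hasDerivAt_id t).smul_const d).const_add p
  have hder : ∀ t : ℝ, HasDerivAt φ
      (L * ‖d‖ ^ 2 * t + ⟪g p, d⟫ - ⟪g (p + t • d), d⟫) t := by
    intro t
    have h1 : HasDerivAt (fun s : ℝ => f (p + s • d)) (⟪g (p + t • d), d⟫) t := by
      have := ((hdiff (p + t • d)).hasFDerivAt).comp_hasDerivAt t (hγ t)
      simp at this
      exact this
    have h2 : HasDerivAt (fun s : ℝ => L / 2 * ‖d‖ ^ 2 * s ^ 2 + ⟪g p, d⟫ * s + f p)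
        (L * ‖d‖ ^ 2 * t + ⟪g p, d⟫) t := by
      have ha : HasDerivAt (fun s : ℝ => L / 2 * ‖d‖ ^ 2 * s ^ 2)
          (L / 2 * ‖d‖ ^ 2 * (2 * t)) t := by
        simpa using ((hasDerivAt_pow 2 t).const_mul (L / 2 * ‖d‖ ^ 2))
      have hb : HasDerivAt (fun s : ℝ => ⟪g p, d⟫ * s) (⟪g p, d⟫) t := by
        simpa using (hasDerivAt_id t).const_mul (⟪g p, d⟫)
      have := (ha.add hb).add_const (f p)
      rw [show L * ‖d‖ ^ 2 * t + ⟪g p, d⟫ = L / 2 * ‖d‖ ^ 2 * (2 * t) + ⟪g p, d⟫ by ring]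
      exact this
    exact h2.sub h1
  have hmono : MonotoneOn φ (Set.Icc (0 : ℝ) 1) := by
    apply monotoneOn_of_deriv_nonneg (convex_Icc 0 1)
    · exact fun t _ => (hder t).continuousAt.continuousWithinAt
    · intro t _
      exact (hder t).differentiableAt.differentiableWithinAt
    · intro t ht
      rw [interior_Icc] at ht
      rw [(hder t).deriv]
      have hcs : ⟪g (p + t • d) - g p, d⟫ ≤ ‖g (p + t • d) - g p‖ * ‖d‖ :=
        real_inner_le_norm _ _
      have hlipb : ‖g (p + t • d) - g p‖ ≤ L * (t * ‖d‖) := by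
        have := hlip (p + t • d) p
        simpa [norm_smul, abs_of_nonneg ht.1.le, mul_comm] using this
      have hkey : ⟪g (p + t • d), d⟫ - ⟪g p, d⟫ ≤ L * t * ‖d‖ ^ 2 := by
        calc ⟪g (p + t • d), d⟫ - ⟪g p, d⟫ = ⟪g (p + t • d) - g p, d⟫ := by
              rw [inner_sub_left]
          _ ≤ ‖g (p + t • d) - g p‖ * ‖d‖ := hcs
          _ ≤ L * (t * ‖d‖) * ‖d‖ := by
              apply mul_le_mul_of_nonneg_right hlipb (norm_nonneg d)
          _ = L * t * ‖d‖ ^ 2 := by ring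
      linarith
  have h01 : φ 0 ≤ φ 1 := hmono (by norm_num) (by norm_num) zero_le_one
  have h0 : φ 0 = 0 := by simp [hφ]
  have h1 : φ 1 = L / 2 * ‖d‖ ^ 2 + ⟪g p, d⟫ + f p - f (p + d) := by simp [hφ]
  rw [h0, h1] at h01
  linarith

/-- Linear convergence rate of gradient descent for `μ`-strongly convex functions with
`L`-Lipschitz gradient: `f x⁽ᵗ⁾ - f x* ≤ (1 - μ/L)ᵗ (f x⁽⁰⁾ - f x*)`. -/
theorem gradient_descent_strongly_convex_rate {E : Type*} [NormedAddCommGroup E]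
    [InnerProductSpace ℝ E] [CompleteSpace E] (f : E → ℝ) (g : E → E)
    (L μ : ℝ) (hμ : 0 < μ) (hμL : μ ≤ L)
    (hdiff : ∀ z, HasGradientAt f (g z) z)
    (hlip : ∀ z w, ‖g z - g w‖ ≤ L * ‖z - w‖)
    (hsc : ∀ z w, f z + ⟪g z, w - z⟫ + μ / 2 * ‖w - z‖ ^ 2 ≤ f w)
    (xstar : E) (hmin : ∀ y, f xstar ≤ f y)
    (x : ℕ → E) (hiter : ∀ k, x (k + 1) = x k - (1 / L) • g (x k)) :
    ∀ t : ℕ, f (x t) - f xstar ≤ (1 - μ / L) ^ t * (f (x 0) - f xstar) := by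
  have hL : 0 < L := lt_of_lt_of_le hμ hμL
  -- PL inequality
  have hPL : ∀ p, 2 * μ * (f p - f xstar) ≤ ‖g p‖ ^ 2 := by
    intro p
    have h := hsc p xstar
    have hsq : (0:ℝ) ≤ ‖μ • (xstar - p) + g p‖ ^ 2 := sq_nonneg _
    have hexp : ‖μ • (xstar - p) + g p‖ ^ 2
        = μ ^ 2 * ‖xstar - p‖ ^ 2 + 2 * (μ * ⟪g p, xstar - p⟫) + ‖g p‖ ^ 2 := by
      rw [norm_add_sq_real, norm_smul, real_inner_smul_left, Real.norm_eq_abs,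
        abs_of_pos hμ, real_inner_comm]
      ring
    rw [hexp] at hsq
    nlinarith [h, hsq, hμ]
  -- one step contraction
  have hstep : ∀ k, f (x (k + 1)) - f xstar ≤ (1 - μ / L) * (f (x k) - f xstar) := by
    intro k
    have hdesc := descent_lemma f g L hL hdiff hlip (x k) (-(1 / L) • g (x k))
    have hx1 : x (k + 1) = x k + (-(1 / L) • g (x k)) := by
      rw [hiter k]; module
    have hinner : ⟪g (x k), -(1 / L) • g (x k)⟫ = -(1/L) * ‖g (x k)‖ ^ 2 := by
      rw [real_inner_smul_right, real_inner_self_eq_norm_sq]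
    have hnorm : ‖-(1 / L) • g (x k)‖ ^ 2 = (1/L)^2 * ‖g (x k)‖ ^ 2 := by
      rw [norm_smul, Real.norm_eq_abs, abs_neg, abs_of_pos (by positivity : (0:ℝ) < 1/L)]
      ring
    rw [hx1]
    have hfs : f (x k + -(1 / L) • g (x k)) ≤ f (x k) - 1 / (2 * L) * ‖g (x k)‖ ^ 2 := by
      rw [hinner, hnorm] at hdesc
      have : -(1/L) * ‖g (x k)‖ ^ 2 + L / 2 * ((1/L)^2 * ‖g (x k)‖ ^ 2)
          = -(1 / (2 * L)) * ‖g (x k)‖ ^ 2 := by field_simp; ring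
      linarith [hdesc, this.le]
    have hpl := hPL (x k)
    have hdiv : μ / L * (f (x k) - f xstar) ≤ 1 / (2 * L) * ‖g (x k)‖ ^ 2 := by
      have h2L : (0:ℝ) < 2 * L := by positivity
      rw [div_mul_eq_mul_div, div_le_iff₀ (by positivity : (0:ℝ) < L)]
      calc μ * (f (x k) - f xstar) = (2 * μ * (f (x k) - f xstar)) / 2 := by ring
        _ ≤ ‖g (x k)‖ ^ 2 / 2 := by linarith [hpl]
        _ = 1 / (2 * L) * ‖g (x k)‖ ^ 2 * L := by field_simp
    linarith
  intro t
  induction t with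
  | zero => simp
  | succ n ih =>
    have h1 : f (x (n + 1)) - f xstar ≤ (1 - μ / L) * (f (x n) - f xstar) := hstep n
    have hnn : 0 ≤ 1 - μ / L := by
      rw [sub_nonneg, div_le_one hL]; exact hμL
    calc f (x (n + 1)) - f xstar ≤ (1 - μ / L) * (f (x n) - f xstar) := h1
      _ ≤ (1 - μ / L) * ((1 - μ / L) ^ n * (f (x 0) - f xstar)) :=
          mul_le_mul_of_nonneg_left ih hnn
      _ = (1 - μ / L) ^ (n + 1) * (f (x 0) - f xstar) := by ring
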